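/- Let (X, G) be a CR-dynamical system such that X has at least one isolated point. Then trans_3(G) is dense in X if, and only if, trans_3(G⁻¹) is dense in X. -/

import Mathlib

open Set Topology

variable {X : Type*}

/-- `GPow G n x` : the set of endpoints of `G`-paths of length `n` starting at `x`,
i.e. `G^n(x)`. -/
def GPow (G : Set (X × X)) (n : ℕ) (x : X) : Set X :=
  {y | ∃ p : ℕ → X, p 0 = x ∧ p n = y ∧ ∀ i < n, (p i, p (i + 1)) ∈ G}

/-- `u` is a trajectory of `x` in `(X, G)`. -/
def IsTraj (G : Set (X × X)) (x : X) (u : ℕ → X) : Prop :=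
  u 0 = x ∧ ∀ n : ℕ, (u n, u (n + 1)) ∈ G

/-- `x` is a legal point: it admits a trajectory. -/
def Legal (G : Set (X × X)) (x : X) : Prop := ∃ u : ℕ → X, IsTraj G x u

/-- The inverse relation `G⁻¹`. -/
def Ginv (G : Set (X × X)) : Set (X × X) := {p | (p.2, p.1) ∈ G}

/-- `T_G(x)* = ⋃ₙ G^n(x)`. -/
def TStar (G : Set (X × X)) (x : X) : Set X := ⋃ n : ℕ, GPow G n x

/-- The set of `0`-transitive points. -/
def trans0 [TopologicalSpace X] (G : Set (X × X)) : Set X :=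
  {x | Legal G x ∧ ∀ U : Set X, IsOpen U → U.Nonempty → ∃ n : ℕ, GPow G n x ⊆ U}

/-- The set of `1`-transitive points. -/
def trans1 [TopologicalSpace X] (G : Set (X × X)) : Set X :=
  {x | Legal G x ∧ ∀ u : ℕ → X, IsTraj G x u → Dense (Set.range u)}

/-- The set of `2`-transitive points. -/
def trans2 [TopologicalSpace X] (G : Set (X × X)) : Set X :=
  {x | ∃ u : ℕ → X, IsTraj G x u ∧ Dense (Set.range u)}

/-- The set of `3`-transitive points. -/
def trans3 [TopologicalSpace X] (G : Set (X × X)) : Set X :=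
  {x | Legal G x ∧ Dense (⋃ u ∈ {u : ℕ → X | IsTraj G x u}, Set.range u)}

lemma mem_of_dense_isolated [TopologicalSpace X] {s : Set X} (hs : Dense s) {x : X}
    (hx : IsOpen ({x} : Set X)) : x ∈ s := by
  obtain ⟨y, hy1, hy2⟩ := hs.inter_open_nonempty _ hx ⟨x, rfl⟩
  rwa [mem_singleton_iff.mp hy1] at hy2

lemma traj_mem_GPow {G : Set (X × X)} {x : X} {u : ℕ → X} (h : IsTraj G x u) (n : ℕ) :
    u n ∈ GPow G n x :=
  ⟨u, h.1, rfl, fun i _ => h.2 i⟩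

lemma gpow_trans {G : Set (X × X)} {x y z : X} {m n : ℕ}
    (h1 : y ∈ GPow G m x) (h2 : z ∈ GPow G n y) : z ∈ GPow G (m + n) x := by
  obtain ⟨p, hp0, hpm, hpe⟩ := h1
  obtain ⟨q, hq0, hqn, hqe⟩ := h2
  refine ⟨fun i => if i < m then p i else q (i - m), ?_, ?_, ?_⟩
  · by_cases h : 0 < m
    · simpa [h] using hp0
    · have hm : m = 0 := by omega
      subst hm
      simpa using hq0.trans (hpm ▸ hp0)
  · have : ¬ (m + n < m) := by omega
    simpa [this, Nat.add_sub_cancel_left] using hqn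
  · intro i hi
    by_cases h1' : i + 1 < m
    · have h2' : i < m := by omega
      simpa [h1', h2'] using hpe i (by omega)
    · by_cases h2' : i < m
      · have hieq : i + 1 = m := by omega
        have hq : q (i + 1 - m) = p (i + 1) := by
          rw [show i + 1 - m = 0 by omega, hq0, ← hpm, ← hieq]
        simpa [h1', h2', hq, show q 0 = p (i + 1) by rw [hq0, ← hpm, ← hieq]] using hpe i (by omega)
      · have hs : i + 1 - m = (i - m) + 1 := by omega
        have : ¬ (i + 1 < m) := by omega
        simpa [h2', this, hs] using hqe (i - m) (by omega)

lemma ginv_traj {G : Set (X × X)} (f : X → X) (hf : ∀ w, (f w, w) ∈ G) {z w : X} {n : ℕ}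
    (h : z ∈ GPow G n w) : ∃ v, IsTraj (Ginv G) z v ∧ w ∈ Set.range v := by
  obtain ⟨p, hp0, hpn, hpe⟩ := h
  refine ⟨fun i => if i ≤ n then p (n - i) else f^[i - n] w, ⟨?_, ?_⟩, ⟨n, ?_⟩⟩
  · simp [hpn]
  · intro i
    by_cases h1 : i + 1 ≤ n
    · have h2 : i ≤ n := by omega
      simp only [h1, h2, if_pos]
      show (p (n - (i + 1)), p (n - i)) ∈ G
      have := hpe (n - (i + 1)) (by omega)
      rwa [show n - (i + 1) + 1 = n - i by omega] at this
    · by_cases h2 : i ≤ n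
      · have hieq : i = n := by omega
        simp only [h1, h2, if_pos, if_neg]
        show (f^[i + 1 - n] w, p (n - i)) ∈ G
        rw [hieq, Nat.sub_self, hp0, show n + 1 - n = 1 by omega]
        simpa using hf w
      · have h3 : ¬ (i + 1 ≤ n) := by omega
        simp only [h2, h3, if_neg]
        show (f^[i + 1 - n] w, f^[i - n] w) ∈ G
        rw [show i + 1 - n = (i - n) + 1 by omega, Function.iterate_succ_apply']
        exact hf _
  · simp [Nat.sub_self, hp0]

lemma key_dense_trans3_inv [MetricSpace X] [CompactSpace X] (G : Set (X × X)) (hGc : IsClosed G)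
    (hGne : G.Nonempty) {x₀ : X} (hx : IsOpen ({x₀} : Set X)) (hd : Dense (trans3 G)) :
    Dense (trans3 (Ginv G)) := by
  have hx0 : x₀ ∈ trans3 G := mem_of_dense_isolated hd hx
  obtain ⟨hleg, hDor⟩ := hx0
  -- every point has a predecessor
  have hsnd : IsClosed (Prod.snd '' G) := (hGc.isCompact.image continuous_snd).isClosed
  have hx0pred : ∃ p, (p, x₀) ∈ G := by
    by_cases hXs : ∀ y : X, y = x₀
    · obtain ⟨⟨a, b⟩, hab⟩ := hGne
      exact ⟨a, by rwa [hXs b] at hab⟩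
    · push_neg at hXs
      obtain ⟨y₀, hy₀⟩ := hXs
      obtain ⟨y, hyU, hyt⟩ := hd.inter_open_nonempty {x₀}ᶜ isClosed_singleton.isOpen_compl
        ⟨y₀, hy₀⟩
      have hx0in : x₀ ∈ ⋃ u ∈ {u : ℕ → X | IsTraj G y u}, Set.range u :=
        mem_of_dense_isolated hyt.2 hx
      simp only [mem_iUnion, mem_setOf_eq, mem_range] at hx0in
      obtain ⟨u, hu, m, hum⟩ := hx0in
      have hm : m ≠ 0 := by
        intro h; subst h
        exact hyU (by rw [← hum, hu.1]; rfl)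
      refine ⟨u (m - 1), ?_⟩
      have := hu.2 (m - 1)
      rwa [show m - 1 + 1 = m by omega, hum] at this
  have hpred : ∀ w : X, ∃ p, (p, w) ∈ G := by
    intro w
    rcases eq_or_ne w x₀ with rfl | hw
    · exact hx0pred
    · have hwP : w ∈ Prod.snd '' G := by
        rw [← hsnd.closure_eq, mem_closure_iff]
        intro o ho hwo
        obtain ⟨q, ⟨hqo, hqx⟩, hqD⟩ := hDor.inter_open_nonempty (o ∩ {x₀}ᶜ)
          (ho.inter isClosed_singleton.isOpen_compl) ⟨w, hwo, hw⟩
        simp only [mem_iUnion, mem_setOf_eq, mem_range] at hqD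
        obtain ⟨u, hu, k, huk⟩ := hqD
        have hk : k ≠ 0 := by
          intro h; subst h
          exact hqx (by rw [← huk, hu.1]; rfl)
        have hedge := hu.2 (k - 1)
        rw [show k - 1 + 1 = k by omega, huk] at hedge
        exact ⟨q, hqo, ⟨(u (k - 1), q), hedge, rfl⟩⟩
      obtain ⟨⟨p, w'⟩, hpw, rfl⟩ := hwP
      exact ⟨p, hpw⟩
  choose f hf using hpred
  have hlegInv : ∀ z : X, Legal (Ginv G) z := by
    intro z
    refine ⟨fun n => f^[n] z, rfl, fun n => ?_⟩
    show (f^[n + 1] z, f^[n] z) ∈ G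
    rw [Function.iterate_succ_apply']
    exact hf _
  rw [dense_iff_inter_open]
  intro U hU hUne
  obtain ⟨z, hzU, hzD⟩ := hDor.inter_open_nonempty U hU hUne
  simp only [mem_iUnion, mem_setOf_eq, mem_range] at hzD
  obtain ⟨u, hu, n, hun⟩ := hzD
  have hzGP : z ∈ GPow G n x₀ := hun ▸ traj_mem_GPow hu n
  refine ⟨z, hzU, hlegInv z, ?_⟩
  rw [dense_iff_inter_open]
  intro V hV hVne
  have hwex : ∃ w ∈ V, ∃ k, z ∈ GPow G k w := by
    by_cases hx0V : x₀ ∈ V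
    · exact ⟨x₀, hx0V, n, hzGP⟩
    · obtain ⟨y, hyV, hyt⟩ := hd.inter_open_nonempty V hV hVne
      have hyx : y ≠ x₀ := fun h => hx0V (h ▸ hyV)
      have hx0in : x₀ ∈ ⋃ u ∈ {u : ℕ → X | IsTraj G y u}, Set.range u :=
        mem_of_dense_isolated hyt.2 hx
      simp only [mem_iUnion, mem_setOf_eq, mem_range] at hx0in
      obtain ⟨v, hv, m, hvm⟩ := hx0in
      have : x₀ ∈ GPow G m y := hvm ▸ traj_mem_GPow hv m
      exact ⟨y, hyV, m + n, gpow_trans this hzGP⟩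
  obtain ⟨w, hwV, k, hzk⟩ := hwex
  obtain ⟨v, hv, hwr⟩ := ginv_traj f hf hzk
  exact ⟨w, hwV, Set.mem_biUnion hv hwr⟩

lemma Ginv_Ginv (G : Set (X × X)) : Ginv (Ginv G) = G := rfl

/-- if `X` has an isolated point, then `trans₃(G)` is dense iff
`trans₃(G⁻¹)` is dense. -/
theorem stmt18 [MetricSpace X] [CompactSpace X]
    (G : Set (X × X)) (hGc : IsClosed G) (hGne : G.Nonempty)
    (hiso : ∃ x : X, IsOpen ({x} : Set X)) :
    Dense (trans3 G) ↔ Dense (trans3 (Ginv G)) := by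
  obtain ⟨x₀, hx⟩ := hiso
  constructor
  · intro h
    exact key_dense_trans3_inv G hGc hGne hx h
  · intro h
    have hc : IsClosed (Ginv G) := hGc.preimage continuous_swap
    have hne : (Ginv G).Nonempty := by
      obtain ⟨⟨a, b⟩, hab⟩ := hGne
      exact ⟨(b, a), hab⟩
    have := key_dense_trans3_inv (Ginv G) hc hne hx h
    rwa [Ginv_Ginv] at this
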